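/- Let G be a group and H a subgroup of G. Then H is an IP*-set in G if and only if H has finite index in G. -/

import Mathlib

open Hindman

section Aux

variable {G : Type*} [Group G]

/-- Partial products of a stream: `pp x n = x 0 * x 1 * ⋯ * x (n-1)`. -/
def pp (x : Stream' G) : ℕ → G
  | 0 => 1
  | n + 1 => pp x n * x n

/-- Block product `x a * x (a+1) * ⋯ * x (a+m)`. -/
def blk (x : Stream' G) : ℕ → ℕ → G
  | a, 0 => x a
  | a, m + 1 => x a * blk x (a + 1) m

lemma blk_mem_FP (x : Stream' G) (a m : ℕ) : blk x a m ∈ FP (x.drop a) := by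
  induction m generalizing a with
  | zero =>
    have h := FP.head (x.drop a)
    simpa [blk, Stream'.head, Stream'.get, Stream'.drop, Nat.zero_add] using h
  | succ m ih =>
    have h := ih (a + 1)
    rw [← Stream'.tail_drop'] at h
    have h2 := FP.cons _ _ h
    simpa [blk, Stream'.head, Stream'.get, Stream'.drop, Nat.zero_add] using h2

lemma blk_mem_FP' (x : Stream' G) (a m : ℕ) : blk x a m ∈ FP x :=
  FP_drop_subset_FP x a (blk_mem_FP x a m)

lemma pp_inv_mul (x : Stream' G) (a m : ℕ) :
    (pp x a)⁻¹ * pp x (a + m + 1) = blk x a m := by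
  induction m generalizing a with
  | zero => simp [pp, blk]
  | succ m ih =>
    have h := ih (a + 1)
    have e : a + 1 + m + 1 = a + (m + 1) + 1 := by omega
    rw [e] at h
    calc (pp x a)⁻¹ * pp x (a + (m + 1) + 1)
        = x a * ((pp x (a + 1))⁻¹ * pp x (a + (m + 1) + 1)) := by
          simp [pp, mul_assoc]
      _ = x a * blk x (a + 1) m := by rw [h]
      _ = blk x a (m + 1) := rfl

/-- If every element of `G` lands in `H` after multiplication by some element of a
finite set `T`, then `H` has finite index; contrapositively, if `H.index = 0` we can
always escape finitely many cosets. -/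
lemma escape (H : Subgroup G) (h0 : H.index = 0) (T : Finset G) :
    ∃ y : G, ∀ s ∈ T, s * y ∉ H := by
  by_contra hc
  push_neg at hc
  have hfin : Finite (G ⧸ H) := by
    have : (Set.univ : Set (G ⧸ H)) ⊆ (fun s => ((s⁻¹ : G) : G ⧸ H)) '' (T : Set G) := by
      rintro q -
      obtain ⟨y, rfl⟩ := QuotientGroup.mk_surjective q
      obtain ⟨s, hsT, hs⟩ := hc y
      refine ⟨s, hsT, ?_⟩
      exact (QuotientGroup.eq).mpr (by simpa using hs)
    have : (Set.univ : Set (G ⧸ H)).Finite :=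
      Set.Finite.subset ((T.finite_toSet).image _) this
    exact Set.finite_univ_iff.mp this
  have : H.index ≠ 0 := Subgroup.index_ne_zero_of_finite
  exact this h0

end Aux

/-- A subgroup `H` of a group `G` is an `IP⋆`-set in `G` (it meets the set of finite
products of every sequence in `G`) if and only if `H` has finite index in `G`. -/
theorem stmt_3 {G : Type*} [Group G] (H : Subgroup G) :
    (∀ x : Stream' G, ∃ g ∈ Hindman.FP x, g ∈ H) ↔ H.index ≠ 0 := by
  constructor
  · -- IP⋆ → finite index, by contraposition: if index 0, build a sequence avoiding H
    intro hIP
    by_contra h0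
    classical
    -- simultaneously build the sequence and the finite sets of finite products
    let step : Finset G → G × Finset G := fun S =>
      let y := (escape H h0 (insert (1:G) S)).choose
      (y, S ∪ (insert (1:G) S).image (· * y))
    let f : ℕ → G × Finset G := fun n => Nat.rec (step ∅) (fun _ p => step p.2) n
    let x : Stream' G := fun n => (f n).1
    let S : ℕ → Finset G := fun n => Nat.rec ∅ (fun n _ => (f n).2) n
    have hSsucc : ∀ n, S (n + 1) = S n ∪ (insert (1:G) (S n)).image (· * x n) := by
      intro n
      induction n with
      | zero => rfl
      | succ n _ => rfl
    have hx : ∀ n, ∀ s ∈ insert (1 : G) (S n), s * x n ∉ H := by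
      intro n
      cases n with
      | zero => exact (escape H h0 (insert (1:G) (∅ : Finset G))).choose_spec
      | succ n => exact (escape H h0 (insert (1:G) (f n).2)).choose_spec
    have hSmono : ∀ n, S n ⊆ S (n + 1) := by
      intro n
      rw [hSsucc n]; exact Finset.subset_union_left
    -- the key invariant
    have key : ∀ (y : Stream' G) (g : G), g ∈ FP y → ∀ a, y = x.drop a →
        ∀ s ∈ insert (1 : G) (S a), s * g ∉ H := by
      intro y g hg
      induction hg with
      | head' a =>
        intro b hb s hs
        subst hb
        rw [Stream'.head_drop]
        exact hx b s hs
      | tail' a m _ ih =>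
        intro b hb s hs
        subst hb
        refine ih (b + 1) (Stream'.tail_drop' (i := b) (s := x)) s ?_
        rcases Finset.mem_insert.mp hs with h | h
        · simp [h]
        · exact Finset.mem_insert_of_mem (hSmono b h)
      | cons' a m _ ih =>
        intro b hb s hs
        subst hb
        rw [Stream'.head_drop, ← mul_assoc]
        refine ih (b + 1) (Stream'.tail_drop' (i := b) (s := x)) (s * x b) ?_
        refine Finset.mem_insert_of_mem ?_
        rw [hSsucc b]
        exact Finset.mem_union_right _ (Finset.mem_image_of_mem _ hs)
    obtain ⟨g, hgFP, hgH⟩ := hIP x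
    exact key x g hgFP 0 rfl 1 (Finset.mem_insert_self 1 _) (by simpa using hgH)
  · -- finite index → IP⋆, by pigeonhole on partial products
    intro hne x
    have hfin : Finite (G ⧸ H) := by
      rcases Nat.card_ne_zero.mp hne with ⟨hne', hfin⟩
      exact hfin
    obtain ⟨i, j, hij, hmk⟩ :
        ∃ i j : ℕ, i ≠ j ∧ ((pp x i : G) : G ⧸ H) = ((pp x j : G) : G ⧸ H) :=
      Finite.exists_ne_map_eq_of_infinite _
    wlog hlt : i < j generalizing i j
    · exact this j i hij.symm hmk.symm (by omega)
    have hH : (pp x i)⁻¹ * pp x j ∈ H := QuotientGroup.eq.mp hmk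
    obtain ⟨m, rfl⟩ : ∃ m, j = i + m + 1 := ⟨j - i - 1, by omega⟩
    rw [pp_inv_mul] at hH
    exact ⟨blk x i m, blk_mem_FP' x i m, hH⟩
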